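/- Conservation law: for any graph Laplacian L, innate opinions s, and equilibrium opinions z* = (L+I)^{-1} s, letting s̄ and z̄* denote the mean-centered versions, the identity P_{z*} + 2·D_{G,z*} + I_{z*,s} = s̄ᵀ s̄ holds, where P_{z*} = ‖z̄*‖², D_{G,z*} = z*ᵀ L z*, and I_{z*,s} = ‖z* - s‖². -/

import Mathlib

open Matrix BigOperators Finset

lemma quad_form_aux (n : ℕ) (A : Matrix (Fin n) (Fin n) ℝ)
    (hA : ∀ i j, A i j = A j i) (x : Fin n → ℝ) :
    2 * (x ⬝ᵥ (Matrix.diagonal (fun i => ∑ j, A i j) - A).mulVec x)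
      = ∑ i, ∑ j, A i j * (x i - x j) ^ 2 := by
  have hmid : ∑ i, ∑ j, A i j * x j ^ 2 = ∑ i, ∑ j, A i j * x i ^ 2 := by
    rw [Finset.sum_comm]
    exact Finset.sum_congr rfl fun i _ => Finset.sum_congr rfl fun j _ => by rw [hA]
  have L1 : x ⬝ᵥ (Matrix.diagonal (fun i => ∑ j, A i j) - A).mulVec x
      = (∑ i, ∑ j, A i j * x i ^ 2) - ∑ i, ∑ j, A i j * (x i * x j) := by
    simp only [dotProduct, mulVec, Matrix.sub_apply, diagonal_apply, sub_mul, ite_mul, zero_mul,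
      Finset.sum_sub_distrib, Finset.sum_ite_eq, Finset.mem_univ, if_true, mul_sub,
      Finset.mul_sum]
    congr 1
    · exact Finset.sum_congr rfl fun i _ => by
        rw [Finset.sum_mul, Finset.mul_sum]
        exact Finset.sum_congr rfl fun j _ => by ring
    · exact Finset.sum_congr rfl fun i _ => Finset.sum_congr rfl fun j _ => by ring
  have hrhs : ∑ i, ∑ j, A i j * (x i - x j) ^ 2
      = ((∑ i, ∑ j, A i j * x i ^ 2) + ∑ i, ∑ j, A i j * x j ^ 2)
        - 2 * ∑ i, ∑ j, A i j * (x i * x j) := by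
    rw [Finset.mul_sum]
    simp only [← Finset.sum_add_distrib, ← Finset.sum_sub_distrib, Finset.mul_sum]
    exact Finset.sum_congr rfl fun i _ => Finset.sum_congr rfl fun j _ => by ring
  rw [L1, hrhs, hmid]
  ring

/-- Conservation law: for Laplacian L, innate opinions s, and equilibrium
z* = (L+I)⁻¹ s, with z̄*, s̄ the mean-centered versions:
P_{z*} + 2 D_{G,z*} + I_{z*,s} = s̄ᵀ s̄, where P_{z*} = ‖z̄*‖², D_{G,z*} = z*ᵀ L z*,
I_{z*,s} = ‖z* - s‖². -/
theorem stmt_4 (n : ℕ) (hn : 0 < n)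
    (A : Matrix (Fin n) (Fin n) ℝ)
    (hsymm : A.IsSymm)
    (hnonneg : ∀ i j, 0 ≤ A i j)
    (hdiag : ∀ i, A i i = 0)
    (D : Matrix (Fin n) (Fin n) ℝ) (hD : D = Matrix.diagonal (fun i => ∑ j, A i j))
    (L : Matrix (Fin n) (Fin n) ℝ) (hL : L = D - A)
    (s : Fin n → ℝ)
    (sbar : Fin n → ℝ) (hsbar : sbar = fun i => s i - (∑ j, s j) / n)
    (zstar : Fin n → ℝ) (hzstar : zstar = (L + 1)⁻¹.mulVec s)
    (zbar : Fin n → ℝ) (hzbar : zbar = fun i => zstar i - (∑ j, zstar j) / n) :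
    (∑ i, (zbar i) ^ 2) + 2 * (zstar ⬝ᵥ L.mulVec zstar) + (∑ i, (zstar i - s i) ^ 2)
      = sbar ⬝ᵥ sbar := by
  have hA : ∀ i j, A i j = A j i := fun i j => hsymm.apply j i
  -- nonnegativity of the quadratic form
  have hquad : ∀ x : Fin n → ℝ, 0 ≤ x ⬝ᵥ L.mulVec x := by
    intro x
    have h2 := quad_form_aux n A hA x
    have hnn : 0 ≤ ∑ i, ∑ j, A i j * (x i - x j) ^ 2 :=
      Finset.sum_nonneg fun i _ => Finset.sum_nonneg fun j _ =>
        mul_nonneg (hnonneg i j) (sq_nonneg _)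
    rw [hL, hD]
    linarith
  -- L + 1 is Hermitian
  have hherm : (L + 1).IsHermitian := by
    rw [hL, hD]
    ext i j
    simp only [conjTranspose_apply, Matrix.add_apply, Matrix.sub_apply, diagonal_apply,
      Matrix.one_apply, star_trivial]
    by_cases h : i = j
    · subst h; simp
    · simp [h, Ne.symm h, hA i j]
  -- L + 1 is positive definite
  have hpd : (L + 1).PosDef := by
    refine Matrix.posDef_iff_dotProduct_mulVec.mpr ⟨hherm, fun x hx => ?_⟩
    have heq : star x ⬝ᵥ (L + 1) *ᵥ x = x ⬝ᵥ L.mulVec x + x ⬝ᵥ x := by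
      simp [add_mulVec, dotProduct_add, one_mulVec, star_trivial]
    rw [heq]
    have hxx : 0 < x ⬝ᵥ x := by
      obtain ⟨i, hi⟩ := Function.ne_iff.mp hx
      have : x ⬝ᵥ x = ∑ i, x i ^ 2 := by
        simp [dotProduct, sq]
      rw [this]
      exact Finset.sum_pos' (fun j _ => sq_nonneg _)
        ⟨i, Finset.mem_univ i, lt_of_le_of_ne (sq_nonneg _) (Ne.symm (pow_ne_zero 2 hi))⟩
    linarith [hquad x]
  have hdet : IsUnit (L + 1).det := isUnit_iff_ne_zero.mpr (ne_of_gt hpd.det_pos)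
  -- equilibrium equation
  have hs : (L + 1).mulVec zstar = s := by
    rw [hzstar, Matrix.mulVec_mulVec, Matrix.mul_nonsing_inv _ hdet, Matrix.one_mulVec]
  set w := L.mulVec zstar with hw
  have hseq : ∀ i, s i = zstar i + w i := by
    intro i
    rw [← hs]
    simp [add_mulVec, one_mulVec, Pi.add_apply, hw]
    ring
  -- column sums of L vanish
  have hcol : ∀ j, ∑ i, L i j = 0 := by
    intro j
    rw [hL, hD]
    simp only [Matrix.sub_apply, diagonal_apply, Finset.sum_sub_distrib,
      Finset.sum_ite_eq', Finset.mem_univ, if_true]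
    have : ∑ i, A i j = ∑ i, A j i := Finset.sum_congr rfl fun i _ => hA i j
    rw [this]
    exact sub_self _
  -- sum of w vanishes
  have hsumw : ∑ i, w i = 0 := by
    rw [hw]
    simp only [mulVec, dotProduct]
    rw [Finset.sum_comm]
    refine Finset.sum_eq_zero fun j _ => ?_
    rw [← Finset.sum_mul, hcol j, zero_mul]
  -- sums of s and zstar agree
  have hsums : ∑ j, s j = ∑ j, zstar j := by
    calc ∑ j, s j = ∑ j, (zstar j + w j) := Finset.sum_congr rfl fun j _ => hseq j
    _ = (∑ j, zstar j) + ∑ j, w j := Finset.sum_add_distrib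
    _ = ∑ j, zstar j := by rw [hsumw, add_zero]
  have hsbar' : ∀ i, sbar i = zbar i + w i := by
    intro i
    rw [hsbar, hzbar, hsums]
    simp only
    rw [hseq i]
    ring
  -- dot product identity
  have hzw : zstar ⬝ᵥ w = ∑ i, zbar i * w i := by
    have h1 : ∑ i, zbar i * w i
        = (∑ i, zstar i * w i) - (∑ j, zstar j) / n * ∑ i, w i := by
      rw [Finset.mul_sum, ← Finset.sum_sub_distrib]
      refine Finset.sum_congr rfl fun i _ => ?_
      rw [hzbar]
      ring
    rw [h1, hsumw, mul_zero, sub_zero]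
    rfl
  have e1 : ∑ i, (zstar i - s i) ^ 2 = ∑ i, (w i) ^ 2 :=
    Finset.sum_congr rfl fun i _ => by rw [hseq i]; ring
  have e2 : sbar ⬝ᵥ sbar
      = (∑ i, (zbar i) ^ 2) + 2 * (∑ i, zbar i * w i) + ∑ i, (w i) ^ 2 := by
    rw [dotProduct, Finset.mul_sum]
    rw [← Finset.sum_add_distrib, ← Finset.sum_add_distrib]
    refine Finset.sum_congr rfl fun i _ => ?_
    rw [hsbar' i]
    ring
  rw [e1, e2, hzw]
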